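/- Let X be a Hilbert space, let A be a densely defined skew-adjoint operator on X with respect to the inner product ⟨·,·⟩, and let H be a bounded, self-adjoint, strictly positive operator on X. Define X_H to be X equipped with the inner product ⟨x,z⟩_H := ⟨Hx,z⟩, and define the operator Ã with domain H⁻¹(dom A) by Ãx := A(Hx). Then Ã is skew-adjoint on X_H. -/

import Mathlib

/-- Let `A` be a densely defined skew-adjoint operator on a Hilbert space `X`
(skew-adjointness is expressed by the characterization of the adjoint:
`z ∈ dom(A*)` with `A* z = w` iff `z ∈ dom A` and `w = -A z`), and let `H` be a bounded,
self-adjoint, strictly positive operator on `X`.  Then the operator `Ã x := A (H x)` with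
domain `{x : H x ∈ dom A}` is skew-adjoint on `X_H`, the space `X` with inner product
`⟨x,z⟩_H := ⟨Hx,z⟩`; i.e. the adjoint of `Ã` with respect to `⟨·,·⟩_H` is `-Ã`. -/
theorem stmt1 {X : Type*} [NormedAddCommGroup X] [InnerProductSpace ℂ X] [CompleteSpace X]
    (H : X →L[ℂ] X) (hH : IsSelfAdjoint H) (m : ℝ) (hm : 0 < m)
    (hlow : ∀ x : X, m * ‖x‖ ^ 2 ≤ (@inner ℂ X _ (H x) x).re)
    (D : Submodule ℂ X) (hD : Dense (D : Set X))
    (A : D →ₗ[ℂ] X)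
    (hskew : ∀ z w : X,
      (∀ x, ∀ hx : x ∈ D, @inner ℂ X _ (A ⟨x, hx⟩) z = @inner ℂ X _ x w) ↔
      ∃ hz : z ∈ D, w = -A ⟨z, hz⟩) :
    ∀ z w : X,
      (∀ x, ∀ hx : H x ∈ D, @inner ℂ X _ (H (A ⟨H x, hx⟩)) z = @inner ℂ X _ (H x) w) ↔
      ∃ hz : H z ∈ D, w = -A ⟨H z, hz⟩ := by
  -- self-adjointness in inner product form
  have hsa : ∀ a b : X, @inner ℂ X _ (H a) b = @inner ℂ X _ a (H b) := by
    intro a b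
    rw [← ContinuousLinearMap.adjoint_inner_left, hH.adjoint_eq]
  -- lower bound on ‖H x‖
  have hbound : ∀ x : X, m * ‖x‖ ≤ ‖H x‖ := by
    intro x
    rcases eq_or_ne x 0 with rfl | hx
    · simp
    have h2 : (@inner ℂ X _ (H x) x).re ≤ ‖H x‖ * ‖x‖ := by
      calc (@inner ℂ X _ (H x) x).re ≤ ‖(@inner ℂ X _ (H x) x)‖ := Complex.re_le_norm _
        _ ≤ ‖H x‖ * ‖x‖ := norm_inner_le_norm _ _
    have hxpos : 0 < ‖x‖ := norm_pos_iff.2 hx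
    have h1 := hlow x
    nlinarith
  -- H is surjective
  have hanti : AntilipschitzWith (⟨m, hm.le⟩ : NNReal)⁻¹ H :=
    ContinuousLinearMap.antilipschitz_of_bound H (by
      intro x
      have hb := hbound x
      change ‖x‖ ≤ m⁻¹ * ‖H x‖
      rw [le_inv_mul_iff₀ hm]
      exact hb)
  have hclosed : IsClosed (Set.range H) :=
    hanti.isClosed_range H.uniformContinuous
  have hrange : LinearMap.range (H : X →ₗ[ℂ] X) = ⊤ := by
    have hcl : IsClosed ((LinearMap.range (H : X →ₗ[ℂ] X) : Submodule ℂ X) : Set X) := by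
      convert hclosed using 1
      exact LinearMap.coe_range _
    haveI : CompleteSpace (LinearMap.range (H : X →ₗ[ℂ] X)) := hcl.completeSpace_coe
    rw [← Submodule.orthogonal_eq_bot_iff]
    rw [Submodule.eq_bot_iff]
    intro z hz
    have h0 : @inner ℂ X _ (H z) z = 0 := hz (H z) ⟨z, rfl⟩
    have := hlow z
    rw [h0] at this
    simp only [Complex.zero_re] at this
    have : ‖z‖ ^ 2 ≤ 0 := by nlinarith
    have : ‖z‖ = 0 := by nlinarith [sq_nonneg ‖z‖, norm_nonneg z]
    simpa using this
  have hsurj : Function.Surjective H := by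
    intro y
    have : y ∈ LinearMap.range (H : X →ₗ[ℂ] X) := by rw [hrange]; trivial
    exact this
  -- main proof
  intro z w
  constructor
  · intro h
    apply (hskew (H z) w).mp
    intro y hy
    obtain ⟨x, rfl⟩ := hsurj y
    have := h x hy
    rw [hsa] at this
    exact this
  · rintro ⟨hz, rfl⟩
    intro x hx
    rw [hsa]
    exact (hskew (H z) (-A ⟨H z, hz⟩)).mpr ⟨hz, rfl⟩ (H x) hx
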